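/- For any position p of R, the set firstextent(p) is a path in the parse tree from p to an ancestor of p: p ∈ first(p) (i.e., p ∈ firstextent(p)), and if v ∈ firstextent(p) and w is any node on the parse-tree path between p and v (i.e., w is an ancestor of p and a descendant of v), then w ∈ firstextent(p). -/
import Mathlib


/-- Non-empty regular expressions over alphabet `α`, identified with their parse trees. -/
inductive RE (α : Type) : Type where
  | eps : RE α
  | ch : α → RE α
  | cat : RE α → RE α → RE α
  | alt : RE α → RE α → RE α
  | star : RE α → RE α

/-- Child directions in the parse tree (a `star`-node only has an `L` child). -/
inductive Dir : Type where
  | L : Dir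
  | R : Dir
  deriving DecidableEq

/-- A node of the parse tree is identified with the path from the root to it. -/
abbrev TreePath : Type := List Dir

namespace RE

variable {α : Type}

/-- The subexpression of `R` rooted at the node reached by following path `v`
(`none` if no such node exists). -/
def sub : RE α → TreePath → Option (RE α)
  | r, [] => some r
  | .cat r _, .L :: p => sub r p
  | .cat _ s, .R :: p => sub s p
  | .alt r _, .L :: p => sub r p
  | .alt _ s, .R :: p => sub s p
  | .star r, .L :: p => sub r p
  | _, _ => none

/-- `v` is a node of the parse tree of `R`. -/
def IsNode (R : RE α) (v : TreePath) : Prop := ∃ r, R.sub v = some r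

/-- The label of a position (character leaf); `none` if `p` is not a position. -/
def labelOf (R : RE α) (p : TreePath) : Option α :=
  match R.sub p with
  | some (.ch a) => some a
  | _ => none

/-- `p` is a position of `R`, i.e. a leaf labeled by a character. -/
def IsPos (R : RE α) (p : TreePath) : Prop := ∃ a, R.labelOf p = some a

/-- `v` is a `⊙`-node (concatenation node). -/
def IsCatNode (R : RE α) (v : TreePath) : Prop := ∃ r s, R.sub v = some (.cat r s)

/-- `v` is a `∗`-node (Kleene-star node). -/
def IsStarNode (R : RE α) (v : TreePath) : Prop := ∃ r, R.sub v = some (.star r)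

/-- `PosSeq r w` holds when `w` is a sequence of (paths to) positions of `r`
whose labels spell some string of `L(r)`. -/
inductive PosSeq : RE α → List TreePath → Prop where
  | eps : PosSeq .eps []
  | ch (a : α) : PosSeq (.ch a) [[]]
  | cat {r s : RE α} {u v : List TreePath} : PosSeq r u → PosSeq s v →
      PosSeq (.cat r s) (u.map (Dir.L :: ·) ++ v.map (Dir.R :: ·))
  | altL {r s : RE α} {u : List TreePath} : PosSeq r u → PosSeq (.alt r s) (u.map (Dir.L :: ·))
  | altR {r s : RE α} {v : List TreePath} : PosSeq s v → PosSeq (.alt r s) (v.map (Dir.R :: ·))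
  | starNil {r : RE α} : PosSeq (.star r) []
  | starCons {r : RE α} {u w : List TreePath} : PosSeq r u → PosSeq (.star r) w →
      PosSeq (.star r) (u.map (Dir.L :: ·) ++ w)

/-- `first(v)`: the positions (as paths in `R`) that occur first in a position
sequence of the subexpression rooted at `v`. -/
def firstSet (R : RE α) (v : TreePath) : Set TreePath :=
  {p | ∃ r, R.sub v = some r ∧ ∃ p' w, PosSeq r (p' :: w) ∧ p = v ++ p'}

/-- `last(v)`: the positions (as paths in `R`) that occur last in a position
sequence of the subexpression rooted at `v`. -/
def lastSet (R : RE α) (v : TreePath) : Set TreePath :=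
  {p | ∃ r, R.sub v = some r ∧ ∃ w p', PosSeq r (w ++ [p']) ∧ p = v ++ p'}

/-- `follow(R,p)`: the positions that can follow `p` in a position sequence of `R`. -/
def followSet (R : RE α) (p : TreePath) : Set TreePath :=
  {q | ∃ w₁ w₂, PosSeq R (w₁ ++ p :: q :: w₂)}

/-- `firstextent(p) = {v : p ∈ first(v)}`. -/
def firstExtent (R : RE α) (p : TreePath) : Set TreePath := {v | p ∈ R.firstSet v}

/-- `lastextent(p) = {v : p ∈ last(v)}`. -/
def lastExtent (R : RE α) (p : TreePath) : Set TreePath := {v | p ∈ R.lastSet v}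

/-- `firstextent(P)` for a set of positions `P`. -/
def firstExtentSet (R : RE α) (P : Set TreePath) : Set TreePath := ⋃ p ∈ P, R.firstExtent p

/-- `lastextent(P)` for a set of positions `P`. -/
def lastExtentSet (R : RE α) (P : Set TreePath) : Set TreePath := ⋃ p ∈ P, R.lastExtent p

end RE

/-- Lowest common ancestor of two nodes = longest common prefix of the paths. -/
def lcaP : TreePath → TreePath → TreePath
  | a :: p, b :: q => if a = b then a :: lcaP p q else []
  | _, _ => []

namespace RE

variable {α : Type}

/-- `u = parent*(v)`: `u` is the lowest ancestor of `v` (possibly `v` itself)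
that is a `∗`-node. -/
def IsLowestStarAnc (R : RE α) (v u : TreePath) : Prop :=
  u <+: v ∧ R.IsStarNode u ∧ ∀ w, w <+: v → R.IsStarNode w → w <+: u

/-- `δ(p,α)`: the `α`-transitions of the position automaton out of position `p`. -/
def delta (R : RE α) (p : TreePath) (a : α) : Set TreePath :=
  {q | R.labelOf q = some a ∧ q ∈ R.followSet p}

/-- `δ(P,α) = ∪_{p ∈ P} δ(p,α)`. -/
def deltaSet (R : RE α) (P : Set TreePath) (a : α) : Set TreePath := ⋃ p ∈ P, R.delta p a

/-- Internal `⊙`-transition: `δ⊙(v,α) = {q ∈ Pos_α : right(v) ∈ firstextent(q)}`. -/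
def deltaOdot (R : RE α) (v : TreePath) (a : α) : Set TreePath :=
  {q | R.labelOf q = some a ∧ q ∈ R.firstSet (v ++ [Dir.R])}

/-- Internal `∗`-transition: `δ∗(v,α) = {q ∈ Pos_α : parent*(v) ∈ firstextent(q)}`. -/
def deltaStar (R : RE α) (v : TreePath) (a : α) : Set TreePath :=
  {q | R.labelOf q = some a ∧ ∃ u, R.IsLowestStarAnc v u ∧ q ∈ R.firstSet u}

/-- `N⊙(P,α)`: the `⊙`-transition nodes. -/
def NOdot (R : RE α) (P : Set TreePath) (a : α) : Set TreePath :=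
  {v | R.IsCatNode v ∧ (v ++ [Dir.L]) ∈ R.lastExtentSet P ∧
    (∃ q, R.labelOf q = some a ∧ q ∈ R.firstSet (v ++ [Dir.R]))}

/-- `N∗(P,α)`: the `∗`-transition nodes. -/
def NStar (R : RE α) (P : Set TreePath) (a : α) : Set TreePath :=
  {u | R.IsStarNode u ∧
    (∃ p ∈ P, ∃ q, R.labelOf q = some a ∧ R.IsLowestStarAnc (lcaP p q) u) ∧
    (∃ p ∈ P, p ∈ R.lastSet u) ∧ (∃ q, R.labelOf q = some a ∧ q ∈ R.firstSet u)}

/-- `u` `∗`-dominates `v`: `u` is a proper ancestor of `v` and `first(v) ⊆ first(u)`. -/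
def StarDom (R : RE α) (u v : TreePath) : Prop :=
  u <+: v ∧ u ≠ v ∧ R.firstSet v ⊆ R.firstSet u

/-- `u` `⊙`-dominates `v`: `u` is a proper ancestor of `v` and
`first(right(v)) ⊆ first(right(u))`. -/
def OdotDom (R : RE α) (u v : TreePath) : Prop :=
  u <+: v ∧ u ≠ v ∧ R.firstSet (v ++ [Dir.R]) ⊆ R.firstSet (u ++ [Dir.R])

/-- `Ñ⊙(P,α)`: the relevant `⊙`-transition nodes. -/
def RelNOdot (R : RE α) (P : Set TreePath) (a : α) : Set TreePath :=
  {v ∈ R.NOdot P a | ∀ u ∈ R.NOdot P a, ¬ R.OdotDom u v}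

/-- `Ñ∗(P,α)`: the relevant `∗`-transition nodes. -/
def RelNStar (R : RE α) (P : Set TreePath) (a : α) : Set TreePath :=
  {v ∈ R.NStar P a | ∀ u ∈ R.NStar P a, ¬ R.StarDom u v}

/-- `v` is a node of the transition tree `T` of `P`: an ancestor of some position of `P`. -/
def InT (R : RE α) (P : Set TreePath) (v : TreePath) : Prop := ∃ p ∈ P, v <+: p

/-- `v` is a branching node of the transition tree of `P`: both children are in `T`. -/
def Branching (R : RE α) (P : Set TreePath) (v : TreePath) : Prop :=
  R.InT P (v ++ [Dir.L]) ∧ R.InT P (v ++ [Dir.R])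

/-- `v` is a leaf of the transition tree of `P`. -/
def LeafT (R : RE α) (P : Set TreePath) (v : TreePath) : Prop :=
  R.InT P v ∧ ∀ d : Dir, ¬ R.InT P (v ++ [d])

/-- `v` is a `⊙`-live node: a `⊙`-node with `left(v) ∈ lastextent(P)`. -/
def OdotLive (R : RE α) (P : Set TreePath) (v : TreePath) : Prop :=
  R.IsCatNode v ∧ (v ++ [Dir.L]) ∈ R.lastExtentSet P

/-- `v` is weakly `⊙`-dominated by `u`: `u` is `⊙`-live, a proper ancestor of `v`,
and `first(v) ⊆ first(right(u))`. -/
def WeakOdotDom (R : RE α) (P : Set TreePath) (u v : TreePath) : Prop :=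
  R.OdotLive P u ∧ u <+: v ∧ u ≠ v ∧ R.firstSet v ⊆ R.firstSet (u ++ [Dir.R])

/-- The pair `(t, b)` delimits a segment of the transition tree of `P`: a path from a
leaf or branching node `b` up to the nearest branching node `t` strictly above it
(or to the root if there is none). -/
def IsSegment (R : RE α) (P : Set TreePath) (t b : TreePath) : Prop :=
  R.InT P b ∧ t <+: b ∧ t ≠ b ∧
  (R.LeafT P b ∨ R.Branching P b) ∧
  (R.Branching P t ∨ t = []) ∧
  (∀ w, t <+: w → w <+: b → w ≠ t → w ≠ b → ¬ R.Branching P w)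

/-- The language `L(R)`. -/
def lang : RE α → Set (List α)
  | .eps => {[]}
  | .ch a => {[a]}
  | .cat r s => {w | ∃ u ∈ lang r, ∃ v ∈ lang s, w = u ++ v}
  | .alt r s => lang r ∪ lang s
  | .star r => {w | ∃ l : List (List α), (∀ u ∈ l, u ∈ lang r) ∧ w = l.flatten}

/-- The position automaton (Glushkov automaton) of `R`: states are the positions of `R`
plus a start state `none`; for `q ∈ first(R)` there is a transition `(p₀, q, label(q))`,
and for `q ∈ follow(R,p)` a transition `(p, q, label(q))`; accepting states are
`last(R)`, together with `p₀` if `ε ∈ L(R)`. -/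
def posNFA (R : RE α) : NFA α (Option TreePath) where
  step := fun s a =>
    {t | ∃ q : TreePath, t = some q ∧ R.labelOf q = some a ∧
      ((s = none ∧ q ∈ R.firstSet []) ∨ (∃ p, s = some p ∧ q ∈ R.followSet p))}
  start := {none}
  accept := {t | (∃ p, t = some p ∧ p ∈ R.lastSet []) ∨ (t = none ∧ [] ∈ R.lang)}

end RE

namespace RE
variable {α : Type}

lemma sub_append {R r : RE α} {v : TreePath} (h : R.sub v = some r) (m : TreePath) :
    R.sub (v ++ m) = r.sub m := by
  induction R generalizing v with
  | eps => cases v with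
    | nil => simp [sub] at h; subst h; rfl
    | cons d t => simp [sub] at h
  | ch a => cases v with
    | nil => simp [sub] at h; subst h; rfl
    | cons d t => simp [sub] at h
  | cat r1 r2 ih1 ih2 =>
    cases v with
    | nil => simp [sub] at h; subst h; rfl
    | cons d t =>
      cases d with
      | L => simpa [sub] using ih1 (by simpa [sub] using h)
      | R => simpa [sub] using ih2 (by simpa [sub] using h)
  | alt r1 r2 ih1 ih2 =>
    cases v with
    | nil => simp [sub] at h; subst h; rfl
    | cons d t =>
      cases d with
      | L => simpa [sub] using ih1 (by simpa [sub] using h)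
      | R => simpa [sub] using ih2 (by simpa [sub] using h)
  | star r1 ih1 =>
    cases v with
    | nil => simp [sub] at h; subst h; rfl
    | cons d t =>
      cases d with
      | L => simpa [sub] using ih1 (by simpa [sub] using h)
      | R => simp [sub] at h

lemma posSeq_step {r : RE α} {w : List TreePath} (h : PosSeq r w) :
    ∀ (d : Dir) (q' : TreePath) (tail : List TreePath), w = (d :: q') :: tail →
    ∃ r', r.sub [d] = some r' ∧ ∃ tail', PosSeq r' (q' :: tail') := by
  induction h with
  | eps => intro d q' tail hw; simp at hw
  | ch a => intro d q' tail hw; simp at hw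
  | @cat r s u v hu hv ihu ihv =>
    intro d q' tail hw
    cases u with
    | nil =>
      cases v with
      | nil => simp at hw
      | cons v0 vt =>
        simp only [List.map_nil, List.nil_append, List.map_cons, List.cons.injEq] at hw
        obtain ⟨⟨hd, hq⟩, _⟩ := hw
        subst hd; subst hq
        exact ⟨s, by simp [sub], vt, hv⟩
    | cons u0 ut =>
      simp only [List.map_cons, List.cons_append, List.cons.injEq] at hw
      obtain ⟨⟨hd, hq⟩, _⟩ := hw
      subst hd; subst hq
      exact ⟨r, by simp [sub], ut, hu⟩
  | @altL r s u hu ihu =>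
    intro d q' tail hw
    cases u with
    | nil => simp at hw
    | cons u0 ut =>
      simp only [List.map_cons, List.cons.injEq] at hw
      obtain ⟨⟨hd, hq⟩, _⟩ := hw
      subst hd; subst hq
      exact ⟨r, by simp [sub], ut, hu⟩
  | @altR r s v hv ihv =>
    intro d q' tail hw
    cases v with
    | nil => simp at hw
    | cons v0 vt =>
      simp only [List.map_cons, List.cons.injEq] at hw
      obtain ⟨⟨hd, hq⟩, _⟩ := hw
      subst hd; subst hq
      exact ⟨s, by simp [sub], vt, hv⟩
  | starNil => intro d q' tail hw; simp at hw
  | @starCons r u w hu hw ihu ihw =>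
    intro d q' tail heq
    cases u with
    | nil => exact ihw d q' tail (by simpa using heq)
    | cons u0 ut =>
      simp only [List.map_cons, List.cons_append, List.cons.injEq] at heq
      obtain ⟨⟨hd, hq⟩, _⟩ := heq
      subst hd; subst hq
      exact ⟨r, by simp [sub], ut, hu⟩

lemma posSeq_descend {r : RE α} {q : TreePath} {tail : List TreePath}
    (h : PosSeq r (q :: tail)) (m q'' : TreePath) (hq : q = m ++ q'') :
    ∃ r', r.sub m = some r' ∧ ∃ tail', PosSeq r' (q'' :: tail') := by
  induction m generalizing r q tail with
  | nil => exact ⟨r, by simp [sub], tail, by simpa [hq] using h⟩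
  | cons d m' ih =>
    obtain ⟨r1, hr1, tail1, h1⟩ := posSeq_step h d (m' ++ q'') tail (by simp [hq])
    obtain ⟨r', hr', tail', h'⟩ := ih h1 rfl
    refine ⟨r', ?_, tail', h'⟩
    have := sub_append hr1 m'
    simpa using this.symm ▸ hr'


end RE

/-- For any position `p` of `R`, `firstextent(p)` is a path in the parse tree from `p`
to an ancestor of `p`: every member of `firstextent(p)` is an ancestor of `p`,
`p ∈ first(p)`, and if `v ∈ firstextent(p)` and `w` is any node between `p` and `v`
(an ancestor of `p` and a descendant of `v`), then `w ∈ firstextent(p)`. -/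
theorem firstExtent_is_path {α : Type} (R : RE α) (p : TreePath) (hp : R.IsPos p) :
    (∀ v ∈ R.firstExtent p, v <+: p) ∧
    p ∈ R.firstExtent p ∧
    (∀ v w : TreePath, v ∈ R.firstExtent p → v <+: w → w <+: p →
      w ∈ R.firstExtent p) := by
  refine ⟨?_, ?_, ?_⟩
  · rintro v ⟨r, hr, p', w, hseq, rfl⟩
    exact ⟨p', rfl⟩
  · obtain ⟨a, ha⟩ := hp
    unfold RE.labelOf at ha
    split at ha
    · rename_i r hsub heq
      cases ha
      exact ⟨.ch a, heq, [], [], RE.PosSeq.ch a, (List.append_nil p).symm⟩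
    · simp at ha
  · rintro v w ⟨r, hr, p', t, hseq, rfl⟩ hvw hwp
    obtain ⟨m, rfl⟩ := hvw
    have hm : m <+: p' := (List.prefix_append_right_inj v).mp hwp
    obtain ⟨q'', rfl⟩ := hm
    obtain ⟨r', hr', t', hseq'⟩ := RE.posSeq_descend hseq m q'' rfl
    refine ⟨r', ?_, q'', t', hseq', by simp⟩
    rw [RE.sub_append hr m]; exact hr'
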